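/- The set of order ideals of P'(2m+2, 2k+1) that do not contain the element (m+1, 0) (and contain no pair (a,0), (a',−1) with |a−a'| ≤ k+1/2) equals the set of order ideals of P'(2m+1, 2k+1) (with the same forbidden-pair condition). -/

import Mathlib

open Relation

/-- The set L(s,k) = ⋃_j {2i−1+2sj : jk+1 ≤ i ≤ ⌊s/2⌋}. -/
def Lset (s k : ℕ) : Set ℕ :=
  {x | ∃ j i : ℕ, j * k + 1 ≤ i ∧ i ≤ s / 2 ∧ x = 2 * i - 1 + 2 * s * j}

/-- The set R(s,k) = ⋃_j {2i−1+2sj : jk+⌈(s+k)/2⌉+1 ≤ i ≤ s}. -/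
def Rset (s k : ℕ) : Set ℕ :=
  {x | ∃ j i : ℕ, j * k + (s + k + 1) / 2 + 1 ≤ i ∧ i ≤ s ∧ x = 2 * i - 1 + 2 * s * j}

def Pset (s k : ℕ) : Set ℕ := Lset s k ∪ Rset s k

/-- Cover relation of P(s,k): y covers x iff y = x + 2s + 2t, 0 ≤ t ≤ k. -/
def Pcov (s k : ℕ) (x y : ℕ) : Prop :=
  x ∈ Pset s k ∧ y ∈ Pset s k ∧ ∃ t ≤ k, y = x + 2 * s + 2 * t

/-- Order of P(s,k): reflexive-transitive closure of the cover relation. -/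
def Ple (s k : ℕ) : ℕ → ℕ → Prop := ReflTransGen (Pcov s k)

def L'set (s k : ℕ) : Set (ℚ × ℤ) :=
  {p | ∃ j i : ℕ, j * k + 1 ≤ i ∧ i ≤ s / 2 ∧
    p = ((i : ℚ) - (k : ℚ) / 2 * (j : ℚ), (j : ℤ))}

def R'set (s k : ℕ) : Set (ℚ × ℤ) :=
  {p | ∃ j i : ℕ, j * k + (s + k + 1) / 2 + 1 ≤ i ∧ i ≤ s ∧
    p = ((s : ℚ) + 1 - (i : ℚ) + (k : ℚ) / 2 * ((j : ℚ) + 1), -(j : ℤ) - 1)}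

def P'set (s k : ℕ) : Set (ℚ × ℤ) := L'set s k ∪ R'set s k

/-- Cover relation of P'(s,k): q covers p. -/
def P'cov (s k : ℕ) (p q : ℚ × ℤ) : Prop :=
  (p ∈ L'set s k ∧ q ∈ L'set s k ∧ |q.1 - p.1| ≤ (k : ℚ) / 2 ∧ q.2 = p.2 + 1) ∨
  (p ∈ R'set s k ∧ q ∈ R'set s k ∧ |q.1 - p.1| ≤ (k : ℚ) / 2 ∧ q.2 = p.2 - 1)

def P'le (s k : ℕ) : ℚ × ℤ → ℚ × ℤ → Prop := ReflTransGen (P'cov s k)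

/-- Order ideals of P'(s,k). -/
def IsIdealP' (s k : ℕ) (I : Set (ℚ × ℤ)) : Prop :=
  I ⊆ P'set s k ∧ ∀ q ∈ I, ∀ p, P'le s k p q → p ∈ I

/-- No two elements (a,0), (a',−1) with |a−a'| ≤ k/2. -/
def NoClosePair (k : ℕ) (I : Set (ℚ × ℤ)) : Prop :=
  ¬ ∃ a a' : ℚ, (a, (0 : ℤ)) ∈ I ∧ (a', (-1 : ℤ)) ∈ I ∧ |a - a'| ≤ (k : ℚ) / 2

def Jset (s k : ℕ) : Set (Set (ℚ × ℤ)) :=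
  {I | IsIdealP' s k I ∧ NoClosePair k I}

/-- The conjugate partition: number of parts of f exceeding j. -/
noncomputable def conj (f : ℕ → ℕ) (j : ℕ) : ℕ := Set.ncard {i | j < f i}

/-- A partition, as a weakly decreasing function ℕ → ℕ that is eventually 0. -/
def IsPartitionFun (f : ℕ → ℕ) : Prop := Antitone f ∧ ∃ N, f N = 0

def SelfConj (f : ℕ → ℕ) : Prop := ∀ j, f j = conj f j

/-- Hook length of the cell in row i, column j (0-indexed, valid when j < f i). -/
noncomputable def hook (f : ℕ → ℕ) (i j : ℕ) : ℕ := (f i - j) + (conj f j - i) - 1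

/-- f is a t-core: no hook length is divisible by t. -/
def IsTCore (t : ℕ) (f : ℕ → ℕ) : Prop := ∀ i j, j < f i → ¬ (t ∣ hook f i j)

/-- The set of main-diagonal hook lengths of f. -/
def MD (f : ℕ → ℕ) : Set ℕ := {h | ∃ i, i < f i ∧ h = hook f i i}

/-- Steps of a ballot (s,k)-path, recorded as (width in half-units, height change):
up = (k/2,1), down = (k/2,−1), horizontal = (ℓ,0) for 1 ≤ ℓ < k. -/
def ValidStep (k : ℕ) (p : ℕ × ℤ) : Prop :=
  (p.1 = k ∧ (p.2 = 1 ∨ p.2 = -1)) ∨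
  (p.2 = 0 ∧ ∃ l : ℕ, 1 ≤ l ∧ l < k ∧ p.1 = 2 * l)

/-- Free ballot (s,k)-path, with total width w in half-units (w = 2s) and height n. -/
def IsFreeBallot (k w : ℕ) (n : ℤ) (P : List (ℕ × ℤ)) : Prop :=
  (∀ p ∈ P, ValidStep k p) ∧ (P.map Prod.fst).sum = w ∧ (P.map Prod.snd).sum = n

/-- Ballot (s,k)-path: a free ballot path that never goes below the x-axis. -/
def IsBallot (k w : ℕ) (n : ℤ) (P : List (ℕ × ℤ)) : Prop :=
  IsFreeBallot k w n P ∧ ∀ Q, Q <+: P → 0 ≤ (Q.map Prod.snd).sum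

/-- A path is symmetric if it equals its reverse complement. -/
def SymPath (P : List (ℕ × ℤ)) : Prop :=
  P = P.reverse.map (fun p => (p.1, -p.2))

/-- The path starts with a horizontal or a down step. -/
def StartsHD (P : List (ℕ × ℤ)) : Prop :=
  ∃ p rest, P = p :: rest ∧ p.2 ≠ 1

lemma Rshift (m k : ℕ) : R'set (2*m+2) (2*k+1) = R'set (2*m+1) (2*k+1) := by
  ext p
  constructor
  · rintro ⟨j, i, h1, h2, rfl⟩
    refine ⟨j, i - 1, by omega, by omega, ?_⟩
    have hi : 1 ≤ i := by omega
    ext <;> push_cast [Nat.cast_sub hi] <;> ring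
  · rintro ⟨j, i, h1, h2, rfl⟩
    refine ⟨j, i + 1, by omega, by omega, ?_⟩
    ext <;> push_cast <;> ring

lemma Lmono (m k : ℕ) : L'set (2*m+1) k ⊆ L'set (2*m+2) k := by
  rintro p ⟨j, i, h1, h2, rfl⟩
  exact ⟨j, i, h1, by omega, rfl⟩

lemma Pmono (m k : ℕ) : P'set (2*m+1) (2*k+1) ⊆ P'set (2*m+2) (2*k+1) := by
  rintro p (h | h)
  · exact Or.inl (Lmono m _ h)
  · exact Or.inr ((Rshift m k).symm ▸ h)

def Ept (m k j : ℕ) : ℚ × ℤ := ((m:ℚ)+1 - ((2*k+1:ℕ):ℚ)/2 * j, (j:ℤ))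

lemma Ept_mem {m k j : ℕ} (hj : j*(2*k+1) ≤ m) : Ept m k j ∈ L'set (2*m+2) (2*k+1) := by
  refine ⟨j, m+1, by omega, by omega, ?_⟩
  ext <;> simp [Ept] <;> push_cast <;> ring

lemma Lextra {m k : ℕ} {p : ℚ × ℤ} (h1 : p ∈ L'set (2*m+2) (2*k+1))
    (h2 : p ∉ L'set (2*m+1) (2*k+1)) :
    ∃ j, j*(2*k+1) ≤ m ∧ p = Ept m k j := by
  obtain ⟨j, i, hi1, hi2, rfl⟩ := h1
  have : i = m + 1 := by
    by_contra hne
    exact h2 ⟨j, i, hi1, by omega, rfl⟩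
  subst this
  refine ⟨j, by omega, ?_⟩
  ext <;> simp [Ept] <;> push_cast <;> ring

lemma chainE {m k : ℕ} (j : ℕ) (hj : j*(2*k+1) ≤ m) :
    P'le (2*m+2) (2*k+1) (Ept m k 0) (Ept m k j) := by
  induction j with
  | zero => exact ReflTransGen.refl
  | succ j ih =>
    have hj' : j*(2*k+1) ≤ m :=
      le_trans (Nat.mul_le_mul_right _ (Nat.le_succ j)) hj
    refine ReflTransGen.tail (ih hj') ?_
    left
    refine ⟨Ept_mem hj', Ept_mem hj, ?_, ?_⟩
    · simp only [Ept]
      have hnn : ((2*k+1:ℕ):ℚ) ≥ 0 := by positivity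
      rw [abs_le]
      have hk0 : (0:ℚ) ≤ (k:ℚ) := Nat.cast_nonneg k
      constructor <;> push_cast <;> linarith
    · simp only [Ept]
      push_cast
      ring

lemma top_not_mem (m k : ℕ) : ((m : ℚ) + 1, (0 : ℤ)) ∉ P'set (2*m+1) (2*k+1) := by
  rintro (⟨j, i, hi1, hi2, hp⟩ | ⟨j, i, hi1, hi2, hp⟩)
  · have hj : (j:ℤ) = 0 := by
      have := congrArg Prod.snd hp
      simpa using this.symm
    have hj0 : j = 0 := by exact_mod_cast hj
    subst hj0
    have := congrArg Prod.fst hp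
    simp at this
    have : (m:ℚ) + 1 = i := by linarith [this]
    have : (m:ℕ) + 1 = i := by exact_mod_cast this
    omega
  · have := congrArg Prod.snd hp
    simp at this
    omega

lemma Ept_zero (m k : ℕ) : Ept m k 0 = ((m : ℚ) + 1, (0 : ℤ)) := by
  ext <;> simp [Ept]

-- cov step transfer upward: small order cov in 2m+1 implies cov in 2m+2
lemma cov_up {m k : ℕ} {p q : ℚ × ℤ} (h : P'cov (2*m+1) (2*k+1) p q) :
    P'cov (2*m+2) (2*k+1) p q := by
  rcases h with ⟨h1, h2, h3, h4⟩ | ⟨h1, h2, h3, h4⟩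
  · exact Or.inl ⟨Lmono m _ h1, Lmono m _ h2, h3, h4⟩
  · exact Or.inr ⟨(Rshift m k).symm ▸ h1, (Rshift m k).symm ▸ h2, h3, h4⟩

-- if cov in 2m+2 with q ∈ P'set(2m+1), then p ∈ P'set(2m+1) and cov in 2m+1,
-- OR p is an extra point (impossible given cov to q small, we show)
lemma cov_down {m k : ℕ} {p q : ℚ × ℤ} (h : P'cov (2*m+2) (2*k+1) p q)
    (hq : q ∈ P'set (2*m+1) (2*k+1)) : P'cov (2*m+1) (2*k+1) p q := by
  rcases h with ⟨h1, h2, h3, h4⟩ | ⟨h1, h2, h3, h4⟩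
  · -- q ∈ L'set(2m+1): second coord sign
    have hqL : q ∈ L'set (2*m+1) (2*k+1) := by
      rcases hq with hq | hq
      · exact hq
      · exfalso
        obtain ⟨j, i, _, _, hq2⟩ := hq
        obtain ⟨j', i', _, _, hq2'⟩ := h2
        have e1 := congrArg Prod.snd hq2
        have e2 := congrArg Prod.snd hq2'
        simp at e1 e2
        omega
    -- p ∈ L'set(2m+1): else extra, contradiction
    have hpL : p ∈ L'set (2*m+1) (2*k+1) := by
      by_contra hp
      obtain ⟨j, hjm, rfl⟩ := Lextra h1 hp
      obtain ⟨j', i', hi1, hi2, rfl⟩ := hqL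
      simp [Ept] at h3 h4
      have hj' : j' = j + 1 := by exact_mod_cast h4
      subst hj'
      rw [abs_le] at h3
      have hc : ((2*m+1)/2 : ℕ) = m := by omega
      rw [hc] at hi2
      have hi2' : (i' : ℚ) ≤ m := by exact_mod_cast hi2
      have h3' := h3.1
      push_cast at h3'
      nlinarith [h3']
    exact Or.inl ⟨hpL, hqL, h3, h4⟩
  · rw [Rshift m k] at h1 h2
    exact Or.inr ⟨h1, h2, h3, h4⟩

theorem stmt18 (m k : ℕ) (hm : 0 < m) (hk : 0 < k) :
    {I | I ∈ Jset (2 * m + 2) (2 * k + 1) ∧ ((m : ℚ) + 1, (0 : ℤ)) ∉ I} =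
      Jset (2 * m + 1) (2 * k + 1) := by
  ext I
  simp only [Set.mem_setOf_eq, Jset]
  constructor
  · rintro ⟨⟨⟨hsub, hdc⟩, hnc⟩, hmem⟩
    have hsub' : I ⊆ P'set (2*m+1) (2*k+1) := by
      intro p hp
      rcases hsub hp with hpL | hpR
      · by_cases hpL' : p ∈ L'set (2*m+1) (2*k+1)
        · exact Or.inl hpL'
        · exfalso
          obtain ⟨j, hjm, rfl⟩ := Lextra hpL hpL'
          have : Ept m k 0 ∈ I := hdc _ hp _ (chainE j hjm)
          rw [Ept_zero] at this
          exact hmem this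
      · exact Or.inr ((Rshift m k) ▸ hpR)
    refine ⟨⟨hsub', ?_⟩, hnc⟩
    intro q hq p hle
    exact hdc q hq p (ReflTransGen.lift id (fun a b => cov_up) p q hle)
  · rintro ⟨⟨hsub, hdc⟩, hnc⟩
    have key : ∀ p q, P'le (2*m+2) (2*k+1) p q → q ∈ I → p ∈ I := by
      intro p q h
      induction h with
      | refl => exact id
      | tail hab hbc ih =>
        intro hc
        apply ih
        exact hdc _ hc _ (ReflTransGen.single (cov_down hbc (hsub hc)))
    refine ⟨⟨⟨fun p hp => Pmono m k (hsub hp), fun q hq p hle => key p q hle hq⟩, hnc⟩, ?_⟩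
    intro hIn
    exact top_not_mem m k (hsub hIn)
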